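/- Let A be a uniformly closed function algebra on a locally compact Hausdorff space X, let f, g ∈ A with ‖f‖ = ‖g‖ = 1, and let x₀ ∈ X be a point in the Choquet boundary of A with |f(x₀)| = 1 and f(x₀) ≠ g(x₀). Then there exists h ∈ A with ‖h‖ = 1 such that ‖f − h‖ = 2 and ‖g − h‖ < 2. -/

import Mathlib

open scoped ZeroAtInfty



def StronglySeparates {X : Type*} [TopologicalSpace X] (A : Set C₀(X, ℂ)) : Prop :=
  (∀ x : X, ∃ f ∈ A, f x ≠ 0) ∧ ∀ y z : X, y ≠ z → ∃ g ∈ A, g y ≠ g z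

def IsPeaking {X : Type*} [TopologicalSpace X] (A : Set C₀(X, ℂ)) (g : C₀(X, ℂ)) : Prop :=
  g ∈ A ∧ ‖g‖ = 1 ∧ ∀ x : X, ‖g x‖ = 1 → g x = 1

/-- Membership in the Choquet boundary, characterized by the Urysohn-type peaking property
(Rao–Roy): for every `ε > 0` and open `O ∋ x` there is a peaking function `u ∈ A` with
`u x = 1` and `|u| < ε` off `O`. -/
def InChoquet {X : Type*} [TopologicalSpace X] (A : Set C₀(X, ℂ)) (x : X) : Prop :=
  ∀ ε : ℝ, 0 < ε → ∀ O : Set X, IsOpen O → x ∈ O →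
    ∃ u : C₀(X, ℂ), IsPeaking A u ∧ u x = 1 ∧ ∀ z ∉ O, ‖u z‖ < ε


lemma aux_complex_eq {a b : ℂ} (ha : ‖a‖ ≤ 1) (hb : ‖b‖ ≤ 1) (h : ‖a + b‖ = 2) :
    a = b ∧ ‖a‖ = 1 := by
  have ha1 : ‖a‖ = 1 := by
    have := norm_add_le a b; linarith [(by linarith : (1:ℝ) ≤ ‖a‖)]
  have hb1 : ‖b‖ = 1 := by
    have := norm_add_le a b; linarith
  refine ⟨?_, ha1⟩
  have h2 : ‖a + b‖^2 = 4 := by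
    rw [h]; norm_num
  have ha2 : ‖a‖^2 = 1 := by rw [ha1]; norm_num
  have hb2 : ‖b‖^2 = 1 := by rw [hb1]; norm_num
  rw [Complex.sq_norm, Complex.normSq_apply] at h2 ha2 hb2
  simp only [Complex.add_re, Complex.add_im] at h2
  apply Complex.ext <;> nlinarith [sq_nonneg (a.re - b.re), sq_nonneg (a.im - b.im)]

lemma aux_exists_norm_eq {X : Type*} [TopologicalSpace X]
    (F : C₀(X, ℂ)) (hF : F ≠ 0) : ∃ z : X, ‖F z‖ = ‖F‖ := by
  have hc : 0 < ‖F‖ := norm_pos_iff.mpr hF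
  have hcoe : ∀ z : X, ‖F z‖ ≤ ‖F‖ := by
    intro z
    rw [← ZeroAtInftyContinuousMap.norm_toBCF_eq_norm]
    exact F.toBCF.norm_coe_le_norm z
  have hnle : ∀ c : ℝ, 0 ≤ c → (∀ z : X, ‖F z‖ ≤ c) → ‖F‖ ≤ c := by
    intro c hc0 hall
    rw [← ZeroAtInftyContinuousMap.norm_toBCF_eq_norm]
    exact (BoundedContinuousFunction.norm_le hc0).mpr hall
  have htend : Filter.Tendsto F (Filter.cocompact X) (nhds 0) := F.zero_at_infty'
  have hev : ∀ᶠ z in Filter.cocompact X, ‖F z‖ < ‖F‖ / 2 := by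
    have := htend.eventually (Metric.ball_mem_nhds (0 : ℂ) (by linarith : 0 < ‖F‖/2))
    filter_upwards [this] with z hz
    simpa [dist_eq_norm] using hz
  rw [Filter.eventually_iff, Filter.mem_cocompact] at hev
  obtain ⟨K, hK, hKsub⟩ := hev
  have hKne : K.Nonempty := by
    by_contra hne
    rw [Set.not_nonempty_iff_eq_empty] at hne
    have hall : ∀ z : X, ‖F z‖ ≤ ‖F‖ / 2 := by
      intro z
      have : z ∈ Kᶜ := by simp [hne]
      exact le_of_lt (hKsub this)
    linarith [hnle (‖F‖/2) (by linarith) hall]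
  obtain ⟨z₀, hz₀K, hz₀max⟩ := hK.exists_isMaxOn hKne
    (Continuous.continuousOn (by continuity : Continuous fun z => ‖F z‖))
  refine ⟨z₀, le_antisymm (hcoe z₀) ?_⟩
  have hall : ∀ z : X, ‖F z‖ ≤ max ‖F z₀‖ (‖F‖ / 2) := by
    intro z
    by_cases hz : z ∈ K
    · exact le_max_of_le_left (hz₀max hz)
    · exact le_max_of_le_right (le_of_lt (hKsub hz))
  have : ‖F‖ ≤ max ‖F z₀‖ (‖F‖ / 2) :=
    hnle _ (le_max_of_le_right (by linarith)) hall
  rcases max_cases ‖F z₀‖ (‖F‖ / 2) with ⟨he, _⟩ | ⟨he, _⟩ <;> rw [he] at this <;> linarith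

set_option synthInstance.maxHeartbeats 1000000 in
set_option maxHeartbeats 1000000 in
theorem stmt2 {X : Type*} [TopologicalSpace X] [LocallyCompactSpace X] [T2Space X]
    (A : NonUnitalSubalgebra ℂ C₀(X, ℂ)) (hA : IsClosed (A : Set C₀(X, ℂ)))
    (hsep : StronglySeparates (A : Set C₀(X, ℂ)))
    (f g : C₀(X, ℂ)) (hfA : f ∈ A) (hgA : g ∈ A) (hf : ‖f‖ = 1) (hg : ‖g‖ = 1)
    (x₀ : X) (hx₀ : InChoquet (A : Set C₀(X, ℂ)) x₀) (hfx : ‖f x₀‖ = 1)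
    (hne : f x₀ ≠ g x₀) :
    ∃ h ∈ (A : Set C₀(X, ℂ)), ‖h‖ = 1 ∧ ‖f - h‖ = 2 ∧ ‖g - h‖ < 2 := by
  have hd : 0 < ‖f x₀ - g x₀‖ := norm_pos_iff.mpr (sub_ne_zero.mpr hne)
  set O : Set X := {z | ‖g z - g x₀‖ < ‖f x₀ - g x₀‖} with hO
  have hOopen : IsOpen O := by
    have : Continuous fun z : X => ‖g z - g x₀‖ :=
      ((map_continuous g).sub continuous_const).norm
    exact isOpen_lt this continuous_const
  have hx₀O : x₀ ∈ O := by simpa [hO] using hd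
  obtain ⟨u, ⟨huA, hun, hupeak⟩, hux₀, husmall⟩ :=
    hx₀ (1/2) (by norm_num) O hOopen hx₀O
  have hcoe : ∀ (F : C₀(X, ℂ)) (z : X), ‖F z‖ ≤ ‖F‖ := by
    intro F z
    rw [← ZeroAtInftyContinuousMap.norm_toBCF_eq_norm]
    exact F.toBCF.norm_coe_le_norm z
  refine ⟨(-(f x₀)) • u, SMulMemClass.smul_mem _ huA, ?_, ?_, ?_⟩
  · rw [norm_smul (-(f x₀)) u, norm_neg, hfx, hun, one_mul]
  · have hle : ‖f - (-(f x₀)) • u‖ ≤ 2 := by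
      have := norm_sub_le f ((-(f x₀)) • u)
      rw [hf, norm_smul (-(f x₀)) u, norm_neg, hfx, hun] at this
      linarith
    have hge : ‖(f - (-(f x₀)) • u) x₀‖ = 2 := by
      simp only [ZeroAtInftyContinuousMap.coe_sub, ZeroAtInftyContinuousMap.coe_smul,
        Pi.sub_apply, Pi.smul_apply, smul_eq_mul, hux₀, mul_one]
      have : f x₀ - -(f x₀) = (2 : ℂ) * f x₀ := by ring
      rw [this, norm_mul, hfx]
      norm_num
    exact le_antisymm hle (hge ▸ hcoe _ x₀)
  · set G : C₀(X, ℂ) := g - (-(f x₀)) • u with hG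
    by_cases hG0 : G = 0
    · rw [hG0]; norm_num
    obtain ⟨z, hz⟩ := aux_exists_norm_eq G hG0
    rw [← hz]
    have hGz : G z = g z + f x₀ * u z := by
      simp only [hG, ZeroAtInftyContinuousMap.coe_sub, ZeroAtInftyContinuousMap.coe_smul,
        Pi.sub_apply, Pi.smul_apply, smul_eq_mul]
      ring
    by_contra hcon
    push_neg at hcon
    have hgz : ‖g z‖ ≤ 1 := hg ▸ hcoe g z
    have huz : ‖u z‖ ≤ 1 := hun ▸ hcoe u z
    have hfu : ‖f x₀ * u z‖ ≤ 1 := by rw [norm_mul, hfx, one_mul]; exact huz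
    have heq : ‖g z + f x₀ * u z‖ = 2 := by
      have h1 : ‖g z + f x₀ * u z‖ ≤ 2 := le_trans (norm_add_le _ _) (by linarith)
      rw [hGz] at hcon
      linarith
    obtain ⟨heq2, hgz1⟩ := aux_complex_eq hgz hfu heq
    have huz1 : ‖u z‖ = 1 := by
      have : ‖f x₀ * u z‖ = 1 := by rw [← heq2]; exact hgz1
      rwa [norm_mul, hfx, one_mul] at this
    have : u z = 1 := hupeak z huz1
    rw [this, mul_one] at heq2
    have hzO : z ∈ O := by
      by_contra hzO
      have := husmall z hzO
      rw [huz1] at this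
      norm_num at this
    rw [hO] at hzO
    simp only [Set.mem_setOf_eq] at hzO
    rw [← heq2] at hzO
    exact lt_irrefl _ hzO
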